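/- Parameter-count bound for attainability of the SLD quantum information for pure states (Theorem): Let d ≥ 1 and let ψ, l_1,…,l_p ∈ ℂ^d with ‖ψ‖ = 1. Suppose that the p+1 vectors ψ, l_1,…,l_p are linearly independent over ℝ (viewing ℂ^d as a real vector space), that ⟨l_j, ψ⟩ = 0 for every j, and that ⟨l_j, l_k⟩ ∈ ℝ for all j,k. Then p ≤ d − 1. -/
import Mathlib

open scoped BigOperators

noncomputable section

/-- The Hermitian inner product on `Fin d → ℂ`, conjugate-linear in the first argument. -/
def inn {d : ℕ} (x y : Fin d → ℂ) : ℂ := ∑ i, (starRingEnd ℂ) (x i) * y i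

lemma inn_smul_right {d : ℕ} (x y : Fin d → ℂ) (c : ℂ) : inn x (c • y) = c * inn x y := by
  simp [inn, Finset.mul_sum]
  apply Finset.sum_congr rfl
  intros; ring

lemma inn_smul_left {d : ℕ} (x y : Fin d → ℂ) (c : ℂ) :
    inn (c • x) y = (starRingEnd ℂ) c * inn x y := by
  simp [inn, Finset.mul_sum]
  apply Finset.sum_congr rfl
  intros; ring

lemma inn_sum_right {d n : ℕ} (x : Fin d → ℂ) (f : Fin n → (Fin d → ℂ)) :
    inn x (∑ j, f j) = ∑ j, inn x (f j) := by
  simp only [inn, Finset.sum_apply, Finset.mul_sum]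
  exact Finset.sum_comm

lemma inn_sum_left {d n : ℕ} (x : Fin d → ℂ) (f : Fin n → (Fin d → ℂ)) :
    inn (∑ j, f j) x = ∑ j, inn (f j) x := by
  simp only [inn, Finset.sum_apply, map_sum, Finset.sum_mul]
  exact Finset.sum_comm

lemma inn_conj {d : ℕ} (x y : Fin d → ℂ) : inn x y = (starRingEnd ℂ) (inn y x) := by
  simp [inn, map_sum, map_mul, mul_comm]

lemma inn_self_eq_zero {d : ℕ} {x : Fin d → ℂ} (h : inn x x = 0) : x = 0 := by
  have h2 : (↑(∑ i, Complex.normSq (x i)) : ℂ) = 0 := by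
    rw [← h]
    simp [inn, Complex.normSq_eq_conj_mul_self]
  have h3 : ∑ i, Complex.normSq (x i) = 0 := by exact_mod_cast h2
  funext i
  have := (Finset.sum_eq_zero_iff_of_nonneg (fun i _ => Complex.normSq_nonneg (x i))).mp h3 i
    (Finset.mem_univ i)
  simpa [Complex.normSq_eq_zero] using this

/-- **Parameter-count bound for attainability of the SLD quantum information for
pure states.**  If `ψ, l_1, …, l_p` are `ℝ`-linearly independent, `⟨l_j, ψ⟩ = 0` for
all `j`, and all `⟨l_j, l_k⟩` are real, then `p ≤ d − 1`. -/
theorem pure_state_parameter_bound {d p : ℕ} (hd : 1 ≤ d)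
    (ψ : Fin d → ℂ) (l : Fin p → (Fin d → ℂ))
    (hψ : inn ψ ψ = 1)
    (hR : LinearIndependent ℝ (Fin.cons ψ l : Fin (p + 1) → (Fin d → ℂ)))
    (horth : ∀ j, inn (l j) ψ = 0)
    (hreal : ∀ j k, (inn (l j) (l k)).im = 0) :
    p ≤ d - 1 := by
  have hl : LinearIndependent ℝ l := by
    have := hR.comp Fin.succ (Fin.succ_injective p)
    simpa using this
  -- key: real-linear combinations of l's in the kernel against all l's vanish
  have key : ∀ a : Fin p → ℝ, (∀ k, inn (l k) (∑ j, (a j : ℂ) • l j) = 0) →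
      ∀ j, a j = 0 := by
    intro a ha
    have hx : (∑ j, (a j : ℂ) • l j) = 0 := by
      apply inn_self_eq_zero
      rw [inn_sum_left]
      simp only [inn_smul_left]
      apply Finset.sum_eq_zero
      intro k _
      rw [ha k, mul_zero]
    have hx' : (∑ j, a j • l j) = 0 := by
      rw [← hx]
      apply Finset.sum_congr rfl
      intro j _
      funext i
      simp [Complex.real_smul]
    exact fun j => (Fintype.linearIndependent_iff.mp hl) a hx' j
  have hC : LinearIndependent ℂ (Fin.cons ψ l : Fin (p + 1) → (Fin d → ℂ)) := by
    rw [Fintype.linearIndependent_iff]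
    intro g hg
    rw [Fin.sum_univ_succ] at hg
    simp only [Fin.cons_zero, Fin.cons_succ] at hg
    set c : Fin p → ℂ := fun j => g j.succ with hc
    -- pair with ψ to kill g 0
    have hg0 : g 0 = 0 := by
      have h1 : inn ψ (g 0 • ψ + ∑ j, c j • l j) = g 0 := by
        have hsum : g 0 • ψ + ∑ j, c j • l j = ∑ i : Fin (p+1),
            (Fin.cons (g 0 • ψ) (fun j => c j • l j) : Fin (p+1) → Fin d → ℂ) i := by
          rw [Fin.sum_univ_succ]; simp
        rw [hsum, inn_sum_right, Fin.sum_univ_succ]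
        simp only [Fin.cons_zero, Fin.cons_succ, inn_smul_right]
        have hz : ∀ j, inn ψ (l j) = 0 := fun j => by rw [inn_conj, horth, map_zero]
        simp [hψ, hz]
      rw [hg] at h1
      rw [← h1]
      simp [inn]
    rw [hg0, zero_smul, zero_add] at hg
    -- split into real and imaginary parts
    have hlk : ∀ k, inn (l k) (∑ j, c j • l j) = 0 := by
      intro k; rw [hg]; simp [inn]
    have hsplit : ∀ k, (∑ j, ((c j).re : ℂ) * inn (l k) (l j))
        + Complex.I * (∑ j, ((c j).im : ℂ) * inn (l k) (l j)) = 0 := by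
      intro k
      have := hlk k
      rw [inn_sum_right] at this
      simp only [inn_smul_right] at this
      rw [← this, Finset.mul_sum, ← Finset.sum_add_distrib]
      apply Finset.sum_congr rfl
      intro j _
      have hrc : c j = ((c j).re : ℂ) + ((c j).im : ℂ) * Complex.I :=
        (Complex.re_add_im (c j)).symm
      linear_combination (- inn (l k) (l j)) * hrc
    have hre : ∀ k, inn (l k) (∑ j, ((c j).re : ℂ) • l j) = 0 := by
      intro k
      rw [inn_sum_right]; simp only [inn_smul_right]
      have h := hsplit k
      set z := ∑ j, ((c j).re : ℂ) * inn (l k) (l j) with hz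
      set w := ∑ j, ((c j).im : ℂ) * inn (l k) (l j) with hw
      have hzim : z.im = 0 := by
        rw [hz, Complex.im_sum]
        apply Finset.sum_eq_zero
        intro j _
        simp [Complex.mul_im, hreal k j]
      have hwim : w.im = 0 := by
        rw [hw, Complex.im_sum]
        apply Finset.sum_eq_zero
        intro j _
        simp [Complex.mul_im, hreal k j]
      have hre' : z.re = 0 := by
        have := congrArg Complex.re h
        simpa [Complex.add_re, Complex.mul_re, hwim] using this
      exact Complex.ext hre' hzim
    have him : ∀ k, inn (l k) (∑ j, ((c j).im : ℂ) • l j) = 0 := by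
      intro k
      rw [inn_sum_right]; simp only [inn_smul_right]
      have h := hsplit k
      set z := ∑ j, ((c j).re : ℂ) * inn (l k) (l j) with hz
      set w := ∑ j, ((c j).im : ℂ) * inn (l k) (l j) with hw
      have hzim : z.im = 0 := by
        rw [hz, Complex.im_sum]
        apply Finset.sum_eq_zero
        intro j _
        simp [Complex.mul_im, hreal k j]
      have hwim : w.im = 0 := by
        rw [hw, Complex.im_sum]
        apply Finset.sum_eq_zero
        intro j _
        simp [Complex.mul_im, hreal k j]
      have hwre : w.re = 0 := by
        have := congrArg Complex.im h
        simpa [Complex.add_im, Complex.mul_im, hzim] using this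
      exact Complex.ext hwre hwim
    have hare := key (fun j => (c j).re) hre
    have hbim := key (fun j => (c j).im) him
    intro i
    refine Fin.cases hg0 (fun j => ?_) i
    have : c j = 0 := Complex.ext (hare j) (hbim j)
    exact this
  have hcard : p + 1 ≤ Module.finrank ℂ (Fin d → ℂ) := by
    simpa using hC.fintype_card_le_finrank
  have : Module.finrank ℂ (Fin d → ℂ) = d := by simp
  omega
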